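/- For every s ∈ (1/2, 3/4) one has (V_0^2 ∘ H_0^2)(s, 3/4 − s) = (3/2 − s, s − 1/4), and for every u ∈ (3/4, 1) one has (V_0^2 ∘ H_0^2)(u, 5/4 − u) = (3/2 − u, u − 3/4) (all coordinates taken modulo 1). Consequently V_0^2 ∘ H_0^2 maps the segment {(s, 3/4 − s) : s ∈ (1/2, 3/4)} bijectively onto the segment {(u, 5/4 − u) : u ∈ (3/4, 1)} and vice versa, and every point of these two segments is a fixed point of (V_0^2 ∘ H_0^2)². -/
import Mathlib

/- 𝕋 = ℝ/ℤ, with d_𝕋 the quotient distance (norm of the difference in AddCircle 1). -/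
noncomputable section

abbrev T1 := AddCircle (1 : ℝ)

/-- The distance d_𝕋(x,y) = min{|x−y|, 1−|x−y|} on 𝕋. -/
noncomputable def dT (x y : T1) : ℝ := ‖x - y‖

/-- Horizontal wedge flow map H_ω^τ(x₁,x₂) = (x₁ + τ·d_𝕋(x₂,ω), x₂). -/
noncomputable def Hmap (ω : T1) (τ : ℝ) (p : T1 × T1) : T1 × T1 :=
  (p.1 + (↑(τ * dT p.2 ω) : T1), p.2)

/-- Vertical wedge flow map V_ω^τ(x₁,x₂) = (x₁, x₂ + τ·d_𝕋(x₁,ω)). -/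
noncomputable def Vmap (ω : T1) (τ : ℝ) (p : T1 × T1) : T1 × T1 :=
  (p.1, p.2 + (↑(τ * dT p.1 ω) : T1))

/-- The segment {(s, 3/4 − s) : s ∈ (1/2, 3/4)} ⊆ 𝕋². -/
def segC : Set (T1 × T1) :=
  {p | ∃ s ∈ Set.Ioo (1/2 : ℝ) (3/4), p = (((s : ℝ) : T1), ((3/4 - s : ℝ) : T1))}

/-- The segment {(u, 5/4 − u) : u ∈ (3/4, 1)} ⊆ 𝕋². -/
def segD : Set (T1 × T1) :=
  {p | ∃ u ∈ Set.Ioo (3/4 : ℝ) 1, p = (((u : ℝ) : T1), ((5/4 - u : ℝ) : T1))}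

lemma dT_round (x : ℝ) : dT ((x : ℝ) : T1) 0 = |x - round x| := by
  simp [dT, AddCircle.norm_eq]

lemma dT_small {x : ℝ} (h0 : 0 < x) (h : x < 1/2) : dT ((x : ℝ) : T1) 0 = x := by
  rw [dT_round]
  have : round x = 0 := by
    rw [round_eq]; apply Int.floor_eq_iff.mpr; constructor <;> push_cast <;> linarith
  rw [this]; simp [abs_of_pos h0]

lemma dT_big {x : ℝ} (h : 1/2 < x) (h1 : x < 1) : dT ((x : ℝ) : T1) 0 = 1 - x := by
  rw [dT_round]
  have : round x = 1 := by
    rw [round_eq]; apply Int.floor_eq_iff.mpr; constructor <;> push_cast <;> linarith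
  rw [this]; push_cast; rw [abs_of_neg (by linarith)]; ring

lemma coe_inj {x y : ℝ} (hx : x ∈ Set.Ico (0:ℝ) 1) (hy : y ∈ Set.Ico (0:ℝ) 1)
    (h : ((x : ℝ) : T1) = y) : x = y := by
  rwa [AddCircle.coe_eq_coe_iff_of_mem_Ico (by rw [zero_add]; exact hx)
    (by rw [zero_add]; exact hy)] at h

lemma coe_shift (x : ℝ) : ((x + 1 : ℝ) : T1) = ((x : ℝ) : T1) := by
  rw [AddCircle.coe_add (p := (1:ℝ)), AddCircle.coe_period (p := (1:ℝ)), add_zero]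

lemma coe_add' (x y : ℝ) : ((x : ℝ) : T1) + ((y : ℝ) : T1) = ((x + y : ℝ) : T1) :=
  (AddCircle.coe_add (p := (1:ℝ)) x y).symm

lemma mapC {s : ℝ} (h1 : 1/2 < s) (h2 : s < 3/4) :
    (Vmap 0 2 ∘ Hmap 0 2) (((s : ℝ) : T1), ((3/4 - s : ℝ) : T1)) =
      (((3/2 - s : ℝ) : T1), ((s - 1/4 : ℝ) : T1)) := by
  have d1 : dT ((3/4 - s : ℝ) : T1) 0 = 3/4 - s := dT_small (by linarith) (by linarith)
  simp only [Function.comp_apply, Hmap, d1]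
  have e1 : (((s : ℝ) : T1) + ((2 * (3/4 - s) : ℝ) : T1)) = ((3/2 - s : ℝ) : T1) := by
    rw [coe_add']; congr 1; ring
  rw [e1]
  have d2 : dT ((3/2 - s : ℝ) : T1) 0 = s - 1/2 := by
    rw [dT_big (by linarith) (by linarith)]; ring
  simp only [Vmap, d2]
  have e2 : (((3/4 - s : ℝ) : T1) + ((2 * (s - 1/2) : ℝ) : T1)) = ((s - 1/4 : ℝ) : T1) := by
    rw [coe_add']; congr 1; ring
  rw [e2]

lemma mapD {u : ℝ} (h1 : 3/4 < u) (h2 : u < 1) :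
    (Vmap 0 2 ∘ Hmap 0 2) (((u : ℝ) : T1), ((5/4 - u : ℝ) : T1)) =
      (((3/2 - u : ℝ) : T1), ((u - 3/4 : ℝ) : T1)) := by
  have d1 : dT ((5/4 - u : ℝ) : T1) 0 = 5/4 - u := dT_small (by linarith) (by linarith)
  simp only [Function.comp_apply, Hmap, d1]
  have e1 : (((u : ℝ) : T1) + ((2 * (5/4 - u) : ℝ) : T1)) = ((3/2 - u : ℝ) : T1) := by
    rw [coe_add', show (u + 2 * (5/4 - u) : ℝ) = (3/2 - u) + 1 by ring, coe_shift]
  rw [e1]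
  have d2 : dT ((3/2 - u : ℝ) : T1) 0 = u - 1/2 := by
    rw [dT_big (by linarith) (by linarith)]; ring
  simp only [Vmap, d2]
  have e2 : (((5/4 - u : ℝ) : T1) + ((2 * (u - 1/2) : ℝ) : T1)) = ((u - 3/4 : ℝ) : T1) := by
    rw [coe_add', show (5/4 - u + 2 * (u - 1/2) : ℝ) = (u - 3/4) + 1 by ring, coe_shift]
  rw [e2]

/-- (V_0^2 ∘ H_0^2)(s, 3/4−s) = (3/2−s, s−1/4) for s ∈ (1/2, 3/4) and
(V_0^2 ∘ H_0^2)(u, 5/4−u) = (3/2−u, u−3/4) for u ∈ (3/4, 1); consequently V_0^2 ∘ H_0^2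
maps each of the two segments bijectively onto the other, and every point of these two
segments is a fixed point of (V_0^2 ∘ H_0^2)². -/
theorem wedge_tau2_antidiagonal_segments :
    (∀ s ∈ Set.Ioo (1/2 : ℝ) (3/4),
      (Vmap 0 2 ∘ Hmap 0 2) (((s : ℝ) : T1), ((3/4 - s : ℝ) : T1)) =
        (((3/2 - s : ℝ) : T1), ((s - 1/4 : ℝ) : T1))) ∧
    (∀ u ∈ Set.Ioo (3/4 : ℝ) 1,
      (Vmap 0 2 ∘ Hmap 0 2) (((u : ℝ) : T1), ((5/4 - u : ℝ) : T1)) =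
        (((3/2 - u : ℝ) : T1), ((u - 3/4 : ℝ) : T1))) ∧
    Set.BijOn (Vmap 0 2 ∘ Hmap 0 2) segC segD ∧
    Set.BijOn (Vmap 0 2 ∘ Hmap 0 2) segD segC ∧
    (∀ p ∈ segC ∪ segD, (Vmap 0 2 ∘ Hmap 0 2)^[2] p = p) := by
  refine ⟨fun s hs => mapC hs.1 hs.2, fun u hu => mapD hu.1 hu.2, ?_, ?_, ?_⟩
  · refine ⟨?_, ?_, ?_⟩
    · rintro p ⟨s, hs, rfl⟩
      rw [mapC hs.1 hs.2]
      exact ⟨3/2 - s, ⟨by linarith [hs.2], by linarith [hs.1]⟩,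
        by rw [show (5/4 - (3/2 - s) : ℝ) = s - 1/4 by ring]⟩
    · rintro p ⟨s, hs, rfl⟩ q ⟨s', hs', rfl⟩ h
      rw [mapC hs.1 hs.2, mapC hs'.1 hs'.2] at h
      have := coe_inj (x := 3/2 - s) (y := 3/2 - s')
        ⟨by linarith [hs.2], by linarith [hs.1]⟩
        ⟨by linarith [hs'.2], by linarith [hs'.1]⟩ (Prod.ext_iff.mp h).1
      have hss : s = s' := by linarith
      rw [hss]
    · rintro q ⟨u, hu, rfl⟩
      refine ⟨(((3/2 - u : ℝ) : T1), ((3/4 - (3/2 - u) : ℝ) : T1)),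
        ⟨3/2 - u, ⟨by linarith [hu.2], by linarith [hu.1]⟩, rfl⟩, ?_⟩
      rw [mapC (by linarith [hu.2]) (by linarith [hu.1]),
        show (3/2 - (3/2 - u) : ℝ) = u by ring, show ((3/2 - u) - 1/4 : ℝ) = 5/4 - u by ring]
  · refine ⟨?_, ?_, ?_⟩
    · rintro p ⟨u, hu, rfl⟩
      rw [mapD hu.1 hu.2]
      exact ⟨3/2 - u, ⟨by linarith [hu.2], by linarith [hu.1]⟩,
        by rw [show (3/4 - (3/2 - u) : ℝ) = u - 3/4 by ring]⟩
    · rintro p ⟨u, hu, rfl⟩ q ⟨u', hu', rfl⟩ h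
      rw [mapD hu.1 hu.2, mapD hu'.1 hu'.2] at h
      have := coe_inj (x := 3/2 - u) (y := 3/2 - u')
        ⟨by linarith [hu.2], by linarith [hu.1]⟩
        ⟨by linarith [hu'.2], by linarith [hu'.1]⟩ (Prod.ext_iff.mp h).1
      have huu : u = u' := by linarith
      rw [huu]
    · rintro q ⟨s, hs, rfl⟩
      refine ⟨(((3/2 - s : ℝ) : T1), ((5/4 - (3/2 - s) : ℝ) : T1)),
        ⟨3/2 - s, ⟨by linarith [hs.2], by linarith [hs.1]⟩, rfl⟩, ?_⟩
      rw [mapD (by linarith [hs.2]) (by linarith [hs.1]),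
        show (3/2 - (3/2 - s) : ℝ) = s by ring, show ((3/2 - s) - 3/4 : ℝ) = 3/4 - s by ring]
  · have h2 : ∀ p, (Vmap 0 2 ∘ Hmap 0 2)^[2] p =
        (Vmap 0 2 ∘ Hmap 0 2) ((Vmap 0 2 ∘ Hmap 0 2) p) := fun p => rfl
    rintro p (⟨s, hs, rfl⟩ | ⟨u, hu, rfl⟩) <;> rw [h2]
    · rw [mapC hs.1 hs.2,
        show ((s - 1/4 : ℝ) : T1) = ((5/4 - (3/2 - s) : ℝ) : T1) by congr 1; ring,
        mapD (by linarith [hs.2]) (by linarith [hs.1]),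
        show (3/2 - (3/2 - s) : ℝ) = s by ring, show ((3/2 - s) - 3/4 : ℝ) = 3/4 - s by ring]
    · rw [mapD hu.1 hu.2,
        show ((u - 3/4 : ℝ) : T1) = ((3/4 - (3/2 - u) : ℝ) : T1) by congr 1; ring,
        mapC (by linarith [hu.2]) (by linarith [hu.1]),
        show (3/2 - (3/2 - u) : ℝ) = u by ring, show ((3/2 - u) - 1/4 : ℝ) = 5/4 - u by ring]
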